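/- Let 𝔸 be a finite algebra that is not switchable. Then for every r there exists a nice relation in Inv(𝔸) of arity m ≥ r. -/

import Mathlib

/-- An algebra: a carrier type `A` together with an indexed family of finitary operations. -/
structure MyAlgebra (A : Type) where
  ι : Type
  arity : ι → ℕ
  op : ∀ i : ι, (Fin (arity i) → A) → A

namespace MyAlgebra

variable {A : Type}

/-- A set of `n`-tuples is closed under coordinatewise application of all operations. -/
def Closed (𝔸 : MyAlgebra A) {n : ℕ} (S : Set (Fin n → A)) : Prop :=
  ∀ i : 𝔸.ι, ∀ γ : Fin (𝔸.arity i) → (Fin n → A),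
    (∀ j, γ j ∈ S) → (fun t : Fin n => 𝔸.op i (fun j => γ j t)) ∈ S

/-- The subalgebra of `𝔸^n` generated by `X`. -/
def gen (𝔸 : MyAlgebra A) {n : ℕ} (X : Set (Fin n → A)) : Set (Fin n → A) :=
  ⋂₀ {S : Set (Fin n → A) | X ⊆ S ∧ 𝔸.Closed S}

/-- Polynomially generated powers. -/
def PGP (𝔸 : MyAlgebra A) : Prop :=
  ∃ p : Polynomial ℕ, ∀ n : ℕ, ∃ X : Finset (Fin n → A),
    X.card ≤ p.eval n ∧ 𝔸.gen (X : Set (Fin n → A)) = Set.univ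

/-- Exponentially generated powers. -/
def EGP (𝔸 : MyAlgebra A) : Prop :=
  ∃ b C : ℝ, 1 < b ∧ 0 < C ∧ ∀ n : ℕ, ∀ X : Finset (Fin n → A),
    𝔸.gen (X : Set (Fin n → A)) = Set.univ → C * b ^ n ≤ (X.card : ℝ)

/-- Every operation is idempotent. -/
def Idempotent (𝔸 : MyAlgebra A) : Prop :=
  ∀ i : 𝔸.ι, ∀ a : A, 𝔸.op i (fun _ => a) = a

end MyAlgebra

/-- The number of switches of a tuple: indices `i` with `a i ≠ a (i+1)`,
encoded as pairs of consecutive indices. -/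
def numSwitches {A : Type} [DecidableEq A] {n : ℕ} (a : Fin n → A) : ℕ :=
  (Finset.univ.filter (fun p : Fin n × Fin n =>
    (p.2 : ℕ) = (p.1 : ℕ) + 1 ∧ a p.1 ≠ a p.2)).card

/-- `𝔸` is switchable: for some `r`, every power is generated by tuples with at most `r` switches. -/
def MyAlgebra.Switchable {A : Type} [DecidableEq A] (𝔸 : MyAlgebra A) : Prop :=
  ∃ r : ℕ, ∀ n : ℕ, 𝔸.gen {a : Fin n → A | numSwitches a ≤ r} = Set.univ

/-- A nice relation: not full, and contains every tuple with two equal consecutive entries. -/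
def Nice {A : Type} {m : ℕ} (ρ : Set (Fin m → A)) : Prop :=
  ρ ≠ Set.univ ∧ ∀ c : Fin m → A,
    (∃ i : ℕ, ∃ h : i + 1 < m, c ⟨i, by omega⟩ = c ⟨i + 1, h⟩) → c ∈ ρ

/-- `D_{A,m}`: tuples of length `2m` where some pair `(a_{2i+1}, a_{2i+2})` is equal. -/
def Drel (A : Type) (m : ℕ) : Set (Fin (2 * m) → A) :=
  {a | ∃ i : ℕ, ∃ h : 2 * i + 1 < 2 * m, a ⟨2 * i, by omega⟩ = a ⟨2 * i + 1, h⟩}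

/-- `f` preserves the relation `σ`. -/
def Preserves {A : Type} {s m : ℕ} (f : (Fin s → A) → A) (σ : Set (Fin m → A)) : Prop :=
  ∀ γ : Fin s → (Fin m → A), (∀ j, γ j ∈ σ) → (fun t : Fin m => f (fun j => γ j t)) ∈ σ

/-- `f` is `αβ`-projective. -/
def ABProjective {A : Type} (α β : Set A) {s : ℕ} (f : (Fin s → A) → A) : Prop :=
  ∃ j : Fin s, ∀ a : Fin s → A, ∀ S ∈ ({α, β} : Set (Set A)), a j ∈ S → f a ∈ S

/-- `σ_n(x₁,…,x_{2n}) ⇔ ρ(x₁,x₂) ∨ … ∨ ρ(x_{2n-1},x_{2n})`. -/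
def sigmaRel {A : Type} (ρ : Set (A × A)) (n : ℕ) : Set (Fin (2 * n) → A) :=
  {t | ∃ i : ℕ, ∃ h : 2 * i + 1 < 2 * n, (t ⟨2 * i, by omega⟩, t ⟨2 * i + 1, h⟩) ∈ ρ}

set_option linter.unusedSectionVars false

namespace Stmt5Aux
variable {A : Type} [DecidableEq A]

def pad (n : ℕ) (hn : 0 < n) (i : ℕ) : Fin n := ⟨min i (n-1), by omega⟩

def N {n : ℕ} (hn : 0 < n) (a : Fin n → A) (t : ℕ) : ℕ :=
  ((Finset.range t).filter (fun i => a (pad n hn i) ≠ a (pad n hn (i+1)))).card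

lemma N_zero {n : ℕ} (hn : 0 < n) (a : Fin n → A) : N hn a 0 = 0 := by
  simp [N]

lemma N_succ {n : ℕ} (hn : 0 < n) (a : Fin n → A) (t : ℕ) :
    N hn a (t+1) = N hn a t + (if a (pad n hn t) ≠ a (pad n hn (t+1)) then 1 else 0) := by
  unfold N
  rw [Finset.range_add_one, Finset.filter_insert]
  split
  · rw [Finset.card_insert_of_notMem (by simp)]
  · simp

lemma N_mono {n : ℕ} (hn : 0 < n) (a : Fin n → A) {t t' : ℕ} (h : t ≤ t') :
    N hn a t ≤ N hn a t' :=
  Finset.card_le_card (Finset.filter_subset_filter _ (Finset.range_subset_range.2 h))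

lemma N_succ_le {n : ℕ} (hn : 0 < n) (a : Fin n → A) (t : ℕ) :
    N hn a (t+1) ≤ N hn a t + 1 := by
  rw [N_succ]; split <;> omega

lemma eq_of_N_succ_eq {n : ℕ} (hn : 0 < n) (a : Fin n → A) {t : ℕ}
    (h : N hn a (t+1) = N hn a t) : a (pad n hn t) = a (pad n hn (t+1)) := by
  by_contra hne
  rw [N_succ, if_pos hne] at h
  omega

lemma fiber_const {n : ℕ} (hn : 0 < n) (a : Fin n → A) {t t' : ℕ} (h : t ≤ t')
    (hN : N hn a t = N hn a t') : a (pad n hn t) = a (pad n hn t') := by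
  induction t' , h using Nat.le_induction with
  | base => rfl
  | succ t' ht ih =>
    have h1 : N hn a t ≤ N hn a t' := N_mono hn a ht
    have h2 : N hn a t' ≤ N hn a (t'+1) := N_mono hn a (by omega)
    have e1 : N hn a t = N hn a t' := by omega
    have e2 : N hn a (t'+1) = N hn a t' := by omega
    rw [ih e1, eq_of_N_succ_eq hn a e2]

lemma numSwitches_eq_N {n : ℕ} (hn : 0 < n) (a : Fin n → A) :
    numSwitches a = N hn a (n-1) := by
  unfold numSwitches N
  apply Finset.card_nbij' (fun p : Fin n × Fin n => (p.1 : ℕ))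
    (fun i => (pad n hn i, pad n hn (i+1)))
  · intro p hp
    simp only [Finset.mem_coe, Finset.mem_filter, Finset.mem_univ, true_and] at hp
    obtain ⟨h1, h2⟩ := hp
    have hp1 : (p.1 : ℕ) < n - 1 := by have := p.2.isLt; omega
    have e1 : pad n hn (p.1 : ℕ) = p.1 := by
      simp [pad, Fin.ext_iff]; omega
    have e2 : pad n hn ((p.1 : ℕ)+1) = p.2 := by
      simp [pad, Fin.ext_iff]; omega
    simp only [Finset.mem_coe, Finset.mem_filter, Finset.mem_range]
    exact ⟨hp1, by rwa [e1, e2]⟩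
  · intro i hi
    simp only [Finset.mem_coe, Finset.mem_filter, Finset.mem_range] at hi
    obtain ⟨h1, h2⟩ := hi
    simp only [Finset.mem_coe, Finset.mem_filter, Finset.mem_univ, true_and]
    constructor
    · simp [pad]; omega
    · exact h2
  · intro p hp
    simp only [Finset.mem_coe, Finset.mem_filter, Finset.mem_univ, true_and] at hp
    obtain ⟨h1, h2⟩ := hp
    have hp1 : (p.1 : ℕ) < n - 1 := by have := p.2.isLt; omega
    ext <;> simp [pad] <;> omega
  · intro i hi
    simp only [Finset.mem_coe, Finset.mem_filter, Finset.mem_range] at hi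
    simp [pad]; omega

lemma ivt {n : ℕ} (hn : 0 < n) (a : Fin n → A) :
    ∀ T j, j ≤ N hn a T → ∃ t ≤ T, N hn a t = j := by
  intro T
  induction T with
  | zero => intro j hj; rw [N_zero] at hj; exact ⟨0, le_refl _, by rw [N_zero]; omega⟩
  | succ T ih =>
    intro j hj
    by_cases h : j ≤ N hn a T
    · obtain ⟨t, ht, he⟩ := ih j h
      exact ⟨t, by omega, he⟩
    · have := N_succ_le hn a T
      exact ⟨T+1, le_refl _, by omega⟩

lemma numSwitches_le_of_consec {m : ℕ} (c : Fin m → A) (i : ℕ) (hi : i + 1 < m)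
    (hc : c ⟨i, by omega⟩ = c ⟨i+1, hi⟩) : numSwitches c ≤ m - 2 := by
  have hm : 0 < m := by omega
  rw [numSwitches_eq_N hm]
  have hsub : ((Finset.range (m-1)).filter
      (fun t => c (pad m hm t) ≠ c (pad m hm (t+1)))) ⊆ (Finset.range (m-1)).erase i := by
    intro t ht
    simp only [Finset.mem_filter, Finset.mem_range] at ht
    rw [Finset.mem_erase]
    refine ⟨?_, by simp [ht.1]⟩
    rintro rfl
    apply ht.2
    have e1 : pad m hm t = ⟨t, by omega⟩ := by simp [pad, Fin.ext_iff]; omega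
    have e2 : pad m hm (t+1) = ⟨t+1, hi⟩ := by simp [pad, Fin.ext_iff]; omega
    rw [e1, e2, hc]
  calc N hm c (m-1) ≤ ((Finset.range (m-1)).erase i).card := Finset.card_le_card hsub
    _ ≤ m - 2 := by
        rw [Finset.card_erase_of_mem (by simp; omega), Finset.card_range]
        omega

lemma subset_gen {𝔸 : MyAlgebra A} {n : ℕ} (X : Set (Fin n → A)) : X ⊆ 𝔸.gen X := by
  intro a ha S hS
  exact hS.1 ha

lemma closed_gen (𝔸 : MyAlgebra A) {n : ℕ} (X : Set (Fin n → A)) : 𝔸.Closed (𝔸.gen X) := by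
  intro i γ hγ S hS
  exact hS.2 i γ (fun j => hγ j S hS)

lemma numSwitches_minor {n m : ℕ} (hn : 0 < n) (hm : 0 < m) (g : ℕ → ℕ)
    (hmono : ∀ {t t' : ℕ}, t ≤ t' → g t ≤ g t') (hstep : ∀ t, g (t+1) ≤ g t + 1)
    (hgk : g (n-1) ≤ m - 1) (c : Fin m → A) :
    numSwitches (fun t : Fin n => c (pad m hm (g (t : ℕ)))) ≤ numSwitches c := by
  rw [numSwitches_eq_N hn, numSwitches_eq_N hm c]
  unfold N
  apply Finset.card_le_card_of_injOn g
  · intro t ht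
    simp only [Finset.mem_coe, Finset.mem_filter, Finset.mem_range] at ht ⊢
    obtain ⟨ht1, ht2⟩ := ht
    have vp : ((pad n hn t : Fin n) : ℕ) = t := by simp [pad]; omega
    have vp' : ((pad n hn (t+1) : Fin n) : ℕ) = t + 1 := by simp [pad]; omega
    rw [vp, vp'] at ht2
    have hne : g t ≠ g (t+1) := fun he => ht2 (by rw [he])
    have hst : g (t+1) = g t + 1 := by
      have := hmono (show t ≤ t+1 by omega)
      have := hstep t
      omega
    have hle : g (t+1) ≤ m - 1 := le_trans (hmono (by omega)) hgk
    refine ⟨by omega, ?_⟩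
    rwa [← hst]
  · intro t ht t' ht' he
    simp only [Finset.coe_filter, Finset.mem_range, Set.mem_setOf_eq] at ht ht'
    by_contra hne
    have key : ∀ s s' : ℕ, s < s' → s < n - 1 →
        (c (pad m hm (g ((pad n hn s : Fin n) : ℕ))) ≠
         c (pad m hm (g ((pad n hn (s+1) : Fin n) : ℕ)))) → g s ≠ g s' := by
      intro s s' hss hs1 hcond heq
      have vp : ((pad n hn s : Fin n) : ℕ) = s := by simp [pad]; omega
      have vp' : ((pad n hn (s+1) : Fin n) : ℕ) = s + 1 := by simp [pad]; omega
      rw [vp, vp'] at hcond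
      have hne2 : g s ≠ g (s+1) := fun he2 => hcond (by rw [he2])
      have h1 := hmono (show s ≤ s+1 by omega)
      have h2 := hmono (show s+1 ≤ s' by omega)
      omega
    rcases Nat.lt_or_ge t t' with hlt | hge
    · exact key t t' hlt ht.1 ht.2 he
    · have hlt : t' < t := by omega
      exact key t' t hlt ht'.1 ht'.2 he.symm

end Stmt5Aux


/-- if a finite algebra is not switchable, then for every `r` there is
a nice invariant relation of arity `m ≥ r`. -/
theorem stmt_5 {A : Type} [Fintype A] [DecidableEq A] (𝔸 : MyAlgebra A)
    (h : ¬ 𝔸.Switchable) :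
    ∀ r : ℕ, ∃ m : ℕ, r ≤ m ∧ ∃ ρ : Set (Fin m → A), Nice ρ ∧ 𝔸.Closed ρ := by
  intro r
  rw [MyAlgebra.Switchable] at h
  push_neg at h
  obtain ⟨n, hn0⟩ := h r
  set X : Set (Fin n → A) := {a : Fin n → A | numSwitches a ≤ r} with hX
  set S : Set (Fin n → A) := 𝔸.gen X with hSdef
  have hXS : X ⊆ S := Stmt5Aux.subset_gen X
  have hSclosed : 𝔸.Closed S := Stmt5Aux.closed_gen 𝔸 X
  -- extract minimal-switch counterexample
  obtain ⟨b0, hb0⟩ := Set.ne_univ_iff_exists_notMem S |>.1 hn0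
  set T : Set ℕ := {k : ℕ | ∃ a : Fin n → A, a ∉ S ∧ numSwitches a = k} with hT
  have hTne : T.Nonempty := ⟨numSwitches b0, b0, hb0, rfl⟩
  set k : ℕ := sInf T with hkdef
  obtain ⟨b, hbS, hbk⟩ : ∃ a : Fin n → A, a ∉ S ∧ numSwitches a = k := Nat.sInf_mem hTne
  have hmin : ∀ a : Fin n → A, a ∉ S → k ≤ numSwitches a := fun a ha =>
    Nat.sInf_le ⟨a, ha, rfl⟩
  have hkr : r + 1 ≤ k := by
    by_contra hc
    exact hbS (hXS (show numSwitches b ≤ r by omega))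
  have hn : 0 < n := by
    rcases Nat.eq_zero_or_pos n with h0 | h0
    · exfalso
      have : numSwitches b = 0 := by
        subst h0
        unfold numSwitches
        rw [Finset.card_eq_zero]
        apply Finset.eq_empty_of_forall_notMem
        intro p _
        exact absurd p.1.isLt (by omega)
      omega
    · exact h0
  have hkN : Stmt5Aux.N hn b (n-1) = k := by rw [← Stmt5Aux.numSwitches_eq_N hn b, hbk]
  set m : ℕ := k + 1 with hm
  have hm0 : 0 < m := by omega
  refine ⟨m, by omega, ?_⟩
  set F : (Fin m → A) → (Fin n → A) :=
    fun c => fun t : Fin n => c (Stmt5Aux.pad m hm0 (Stmt5Aux.N hn b (t : ℕ))) with hF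
  refine ⟨{c : Fin m → A | F c ∈ S}, ⟨?_, ?_⟩, ?_⟩
  · -- not univ: construct c₀ with F c₀ = b
    have hsurj : ∀ j : Fin m, ∃ t ≤ n - 1, Stmt5Aux.N hn b t = (j : ℕ) := by
      intro j
      apply Stmt5Aux.ivt hn b (n-1) (j : ℕ)
      rw [hkN]
      omega
    choose tf htf1 htf2 using hsurj
    set c₀ : Fin m → A := fun j => b (Stmt5Aux.pad n hn (tf j)) with hc₀
    have hFc₀ : F c₀ = b := by
      funext t
      show b (Stmt5Aux.pad n hn (tf (Stmt5Aux.pad m hm0 (Stmt5Aux.N hn b (t : ℕ))))) = b t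
      have htle : (t : ℕ) ≤ n - 1 := by have := t.isLt; omega
      have hNle : Stmt5Aux.N hn b (t : ℕ) ≤ k := by
        rw [← hkN]; exact Stmt5Aux.N_mono hn b htle
      have hval : ((Stmt5Aux.pad m hm0 (Stmt5Aux.N hn b (t : ℕ)) : Fin m) : ℕ)
          = Stmt5Aux.N hn b (t : ℕ) := by
        simp [Stmt5Aux.pad]; omega
      set j := Stmt5Aux.pad m hm0 (Stmt5Aux.N hn b (t : ℕ))
      have hNeq : Stmt5Aux.N hn b (tf j) = Stmt5Aux.N hn b (t : ℕ) := by
        rw [htf2 j, hval]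
      have hpt : Stmt5Aux.pad n hn (t : ℕ) = t := by
        ext; simp [Stmt5Aux.pad]; omega
      rcases le_total (tf j) (t : ℕ) with hle | hle
      · rw [Stmt5Aux.fiber_const hn b hle hNeq, hpt]
      · rw [← Stmt5Aux.fiber_const hn b hle hNeq.symm, hpt]
    intro hUniv
    have : c₀ ∈ {c : Fin m → A | F c ∈ S} := hUniv ▸ Set.mem_univ c₀
    rw [Set.mem_setOf_eq, hFc₀] at this
    exact hbS this
  · -- nice tuples
    rintro c ⟨i, hi, hci⟩
    have h1 : numSwitches c ≤ m - 2 := Stmt5Aux.numSwitches_le_of_consec c i hi hci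
    have h2 : numSwitches (F c) ≤ numSwitches c :=
      Stmt5Aux.numSwitches_minor hn hm0 (Stmt5Aux.N hn b)
        (fun hh => Stmt5Aux.N_mono hn b hh) (Stmt5Aux.N_succ_le hn b) (by omega) c
    show F c ∈ S
    by_contra hFS
    have := hmin (F c) hFS
    omega
  · -- closed
    intro i γ hγ
    exact hSclosed i (fun j => F (γ j)) (fun j => hγ j)
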